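/- arXiv:2409.04305 — 2 statements merged into one kernel-verified Lean document; each statement's English description precedes it below -/
import Mathlib

section
/- Let t, u be real numbers with t + i ≠ 0 and u + i ≠ 0 for every integer i ≥ 0, and let (a_{2n})_{n≥1}, (κ_{2ℓ})_{ℓ≥1}, (m_{2k})_{k≥1} be real sequences satisfying the formal power series identities exp(Σ_{ℓ≥1} (κ_{2ℓ}/ℓ) z^{2ℓ}) = 1 + Σ_{n≥1} (a_{2n}/((t)_n (u)_n)) z^{2n} and exp(t Σ_{k≥1} (m_{2k}/k) z^{2k}) = 1 + Σ_{n≥1} a_{2n} z^{2n} in ℝ[[z]]. Then for every k ≥ 1: m_{2k} = Σ_{P ∈ L^odd(2k)} w_{t,u}(P), where the weight w_{t,u}(P) of an odd Łukasiewicz path P of length 2k is the product over all its steps of the following factors: each up step (1, 2s−1) contributes the factor κ_{2s}; each down step from an odd height 2s+1 (ending at even height 2s) contributes the factor (u+s); and each down step from an even height 2s (ending at odd height 2s−1) contributes the factor (t+s). -/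
open Finset


open Finset

/-- Pochhammer symbol `(v)_n = v (v+1) ⋯ (v+n-1)`. -/
noncomputable def pochEval (v : ℝ) (n : ℕ) : ℝ := (ascPochhammer ℝ n).eval v

/-- Formal exponential of a power series with zero constant term. -/
noncomputable def fexp (F : PowerSeries ℝ) : PowerSeries ℝ :=
  PowerSeries.mk fun n =>
    ∑ k ∈ Finset.range (n + 1), (PowerSeries.coeff n (F ^ k)) / (k.factorial : ℝ)

/-- The series `Σ_{ℓ≥1} (x_ℓ/ℓ) z^{2ℓ}` associated to a sequence `(x_{2ℓ})_{ℓ≥1}`. -/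
noncomputable def evenSeries (x : ℕ → ℝ) : PowerSeries ℝ :=
  PowerSeries.mk fun j => if j ≠ 0 ∧ j % 2 = 0 then x (j / 2) / ((j / 2 : ℕ) : ℝ) else 0

/-- The series `1 + Σ_{n≥1} (a_{2n}/((t)_n (u)_n)) z^{2n}`. -/
noncomputable def coeffSeriesTU (t u : ℝ) (a : ℕ → ℝ) : PowerSeries ℝ :=
  PowerSeries.mk fun j =>
    if j = 0 then 1
    else if j % 2 = 0 then a (j / 2) / (pochEval t (j / 2) * pochEval u (j / 2)) else 0

/-- The series `1 + Σ_{n≥1} a_{2n} z^{2n}`. -/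
noncomputable def coeffSeries (a : ℕ → ℝ) : PowerSeries ℝ :=
  PowerSeries.mk fun j =>
    if j = 0 then 1 else if j % 2 = 0 then a (j / 2) else 0

/-!  A Łukasiewicz path of length `n` is encoded by the function `f : Fin n → Fin (n+1)`,
where the `i`-th step of the path is `(1, (f i) - 1)`.  (In any Łukasiewicz path of length `n`
every step `(1,j)` has `-1 ≤ j ≤ n-1`, so this encoding captures all of them.) -/

/-- Height of the vertex just before the (0-based) `m`-th step, for the encoded path `f`. -/
noncomputable def pathHeightE {n : ℕ} (f : Fin n → Fin (n + 1)) (m : ℕ) : ℤ :=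
  ∑ i ∈ Finset.univ.filter (fun j : Fin n => (j : ℕ) < m), (((f i : ℕ) : ℤ) - 1)

/-- The encoded `f` is an odd Łukasiewicz path of length `n`: all steps are of the form
`(1, 2k-1)`, `k ≥ 0`, the path stays (weakly) above the x-axis and ends at `(n,0)`. -/
def IsOddLukPathE {n : ℕ} (f : Fin n → Fin (n + 1)) : Prop :=
  (∀ i, Odd (((f i : ℕ) : ℤ) - 1)) ∧
  (∀ m : ℕ, m ≤ n → 0 ≤ pathHeightE f m) ∧ pathHeightE f n = 0

open Classical in
/-- The (finite) set `L^odd(n)` of odd Łukasiewicz paths of length `n`, in the above encoding. -/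
noncomputable def oddLukPaths (n : ℕ) : Finset (Fin n → Fin (n + 1)) :=
  Finset.univ.filter IsOddLukPathE


namespace Luk

lemma poch_zero (v : ℝ) : pochEval v 0 = 1 := by simp [pochEval]

lemma poch_succ_right (v : ℝ) (n : ℕ) : pochEval v (n+1) = pochEval v n * (v + n) := by
  simp [pochEval, ascPochhammer_succ_right]

lemma poch_succ_left (v : ℝ) (n : ℕ) : pochEval v (n+1) = v * pochEval (v+1) n := by
  simp [pochEval, ascPochhammer_succ_left, Polynomial.eval_comp]

lemma poch_add (v : ℝ) (s m : ℕ) : pochEval v (s + m) = pochEval v s * pochEval (v + s) m := by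
  induction m with
  | zero => simp [poch_zero]
  | succ m ih =>
      rw [show s + (m+1) = (s+m)+1 by ring, poch_succ_right, ih, poch_succ_right]
      push_cast; ring

lemma poch_sub (v : ℝ) (n : ℕ) :
    pochEval (v+1) (n+1) - pochEval v (n+1) = (n+1) * pochEval (v+1) n := by
  rw [poch_succ_right, poch_succ_left]
  push_cast; ring

lemma poch_ne_zero (v : ℝ) (hv : ∀ i : ℕ, v + i ≠ 0) (n : ℕ) : pochEval v n ≠ 0 := by
  induction n with
  | zero => simp [poch_zero]
  | succ n ih => rw [poch_succ_right]; exact mul_ne_zero ih (hv n)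

/-- `B` sequence: `B 0 = 1`, `n B n = ∑_{s=1}^n κ_s B_{n-s}`. -/
noncomputable def Bs (κ : ℕ → ℝ) : ℕ → ℝ
  | 0 => 1
  | (n+1) => (∑ s ∈ Finset.range (n+1), κ (s+1) * Bs κ (n - s)) / (n+1)

lemma Brec (κ : ℕ → ℝ) (n : ℕ) :
    ((n:ℝ)+1) * Bs κ (n+1) = ∑ s ∈ Finset.range (n+1), κ (s+1) * Bs κ (n - s) := by
  rw [Bs]
  field_simp

/-- down-step weight at (integer) height `x`. -/
noncomputable def dwt (t u : ℝ) (x : ℤ) : ℝ :=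
  if x % 2 = 1 then u + (((x - 1) / 2 : ℤ) : ℝ) else t + ((x / 2 : ℤ) : ℝ)

lemma dwt_of_odd (t u : ℝ) (x : ℤ) (j : ℕ) (hx : x = 2*j+1) : dwt t u x = u + j := by
  subst hx
  have h1 : ((2*(j:ℤ)+1) % 2) = 1 := by omega
  have h2 : (2*(j:ℤ)+1-1)/2 = j := by omega
  rw [dwt, if_pos h1, h2, Int.cast_natCast]

lemma dwt_of_even (t u : ℝ) (x : ℤ) (j : ℕ) (hx : x = 2*j) : dwt t u x = t + j := by
  subst hx
  have h1 : ((2*(j:ℤ)) % 2) = 0 := by omega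
  have h2 : (2*(j:ℤ))/2 = j := by omega
  rw [dwt, if_neg (by omega), h2, Int.cast_natCast]

/-- product of down weights `dwt (b+1) ⋯ dwt (b+j)`. -/
noncomputable def Cp (t u : ℝ) (b : ℕ) : ℕ → ℝ
  | 0 => 1
  | (j+1) => Cp t u b j * dwt t u (b+j+1)

lemma Cp_split (t u : ℝ) (b j i : ℕ) : Cp t u b (j + i) = Cp t u b j * Cp t u (b + j) i := by
  induction i with
  | zero => simp [Cp]
  | succ i ih =>
      show Cp t u b ((j+i)+1) = _
      rw [Cp, ih, Cp]
      push_cast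
      ring_nf

lemma Cp_even (t u : ℝ) (j s : ℕ) :
    Cp t u (2*j) (2*s+1) = pochEval (u + j) (s+1) * pochEval (t + j + 1) s := by
  induction s with
  | zero =>
      show Cp t u (2*j) 0 * dwt t u (↑(2*j)+0+1) = _
      rw [Cp, dwt_of_odd t u _ j (by push_cast; ring)]
      simp [poch_zero, poch_succ_right]
  | succ s ih =>
      show Cp t u (2*j) ((2*s+1)+1+1) = _
      rw [Cp, Cp, ih]
      rw [dwt_of_even t u _ (j+s+1) (by push_cast; ring),
          dwt_of_odd t u _ (j+s+1) (by push_cast; ring)]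
      rw [poch_succ_right (u+j) (s+1), poch_succ_right (t+j+1) s]
      push_cast
      ring

lemma Cp_odd (t u : ℝ) (j s : ℕ) :
    Cp t u (2*j+1) (2*s+1) = pochEval (t + j + 1) (s+1) * pochEval (u + j + 1) s := by
  induction s with
  | zero =>
      show Cp t u (2*j+1) 0 * dwt t u (↑(2*j+1)+0+1) = _
      rw [Cp, dwt_of_even t u _ (j+1) (by push_cast; ring)]
      rw [poch_succ_right (t+j+1) 0]
      simp [poch_zero]
      push_cast
      ring
  | succ s ih =>
      show Cp t u (2*j+1) ((2*s+1)+1+1) = _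
      rw [Cp, Cp, ih]
      rw [dwt_of_odd t u _ (j+s+1) (by push_cast; ring),
          dwt_of_even t u _ (j+s+2) (by push_cast; ring)]
      rw [poch_succ_right (t+j+1) (s+1), poch_succ_right (u+j+1) s]
      push_cast
      ring

/-- the `G` coefficient arrays. -/
noncomputable def Gc (t u : ℝ) (κ : ℕ → ℝ) (h n : ℕ) : ℝ :=
  pochEval (t + ((h+1)/2 : ℕ)) n * pochEval (u + (h/2 : ℕ)) n * Bs κ n

lemma Gc_zero (t u : ℝ) (κ : ℕ → ℝ) (h : ℕ) : Gc t u κ h 0 = 1 := by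
  simp [Gc, poch_zero, Bs]

lemma Gc_even (t u : ℝ) (κ : ℕ → ℝ) (j n : ℕ) :
    Gc t u κ (2*j) n = pochEval (t + j) n * pochEval (u + j) n * Bs κ n := by
  have h1 : (2*j+1)/2 = j := by omega
  have h2 : (2*j)/2 = j := by omega
  rw [Gc, h1, h2]

lemma Gc_odd (t u : ℝ) (κ : ℕ → ℝ) (j n : ℕ) :
    Gc t u κ (2*j+1) n = pochEval (t + j + 1) n * pochEval (u + j) n * Bs κ n := by
  have h1 : (2*j+1+1)/2 = j+1 := by omega
  have h2 : (2*j+1)/2 = j := by omega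
  rw [Gc, h1, h2]
  push_cast
  ring_nf

/-- Main algebraic identity (E). -/
lemma E_coeff (t u : ℝ) (κ : ℕ → ℝ) (h n : ℕ) :
    Gc t u κ (h+1) n = Gc t u κ h n +
      ∑ s ∈ Finset.range n, κ (s+1) * Cp t u h (2*s+1) * Gc t u κ (h + 2*s + 2) (n - s - 1) := by
  cases n with
  | zero => simp [Gc_zero]
  | succ n =>
    rcases Nat.even_or_odd h with ⟨j, hj⟩ | ⟨j, hj⟩
    · -- h = 2j
      subst hj
      rw [show j + j = 2*j by ring]
      have hsum : ∀ s ∈ Finset.range (n+1),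
          κ (s+1) * Cp t u (2*j) (2*s+1) * Gc t u κ (2*j + 2*s + 2) (n + 1 - s - 1)
          = (pochEval (u + j) (n+1) * pochEval (t + j + 1) n) * (κ (s+1) * Bs κ (n - s)) := by
        intro s hs
        have hs' : s ≤ n := by simpa using Nat.lt_succ_iff.mp (Finset.mem_range.mp hs)
        have hn1 : n + 1 - s - 1 = n - s := by omega
        rw [hn1, Cp_even, show 2*j + 2*s + 2 = 2*(j+s+1) by ring, Gc_even]
        have e1 : pochEval (u + j) (n+1) = pochEval (u + j) (s+1) * pochEval (u + (j+s+1)) (n-s) := by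
          have h0 := poch_add (u + j) (s+1) (n-s)
          rw [show (s+1)+(n-s) = n+1 by omega] at h0
          rw [h0]
          push_cast; ring_nf
        have e2 : pochEval (t + j + 1) n = pochEval (t + j + 1) s * pochEval (t + (j+s+1)) (n-s) := by
          have h0 := poch_add (t + j + 1) s (n-s)
          rw [show s+(n-s) = n by omega] at h0
          rw [h0]
          push_cast; ring_nf
        rw [e1, e2]
        push_cast
        ring
      rw [Finset.sum_congr rfl hsum, ← Finset.mul_sum, ← Brec κ n]
      rw [Gc_odd, Gc_even]
      have e3 := poch_sub (t + j) n
      push_cast at e3 ⊢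
      linear_combination e3 * (pochEval (u + (j:ℝ)) (n+1) * Bs κ (n+1))
    · -- h = 2j+1
      subst hj
      have hsum : ∀ s ∈ Finset.range (n+1),
          κ (s+1) * Cp t u (2*j+1) (2*s+1) * Gc t u κ (2*j+1 + 2*s + 2) (n + 1 - s - 1)
          = (pochEval (t + j + 1) (n+1) * pochEval (u + j + 1) n) * (κ (s+1) * Bs κ (n - s)) := by
        intro s hs
        have hs' : s ≤ n := by simpa using Nat.lt_succ_iff.mp (Finset.mem_range.mp hs)
        have hn1 : n + 1 - s - 1 = n - s := by omega
        rw [hn1, Cp_odd, show 2*j+1 + 2*s + 2 = 2*(j+s+1)+1 by ring, Gc_odd]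
        have e1 : pochEval (t + j + 1) (n+1) = pochEval (t + j + 1) (s+1) * pochEval (t + (j+s+1) + 1) (n-s) := by
          have h0 := poch_add (t + j + 1) (s+1) (n-s)
          rw [show (s+1)+(n-s) = n+1 by omega] at h0
          rw [h0]
          push_cast; ring_nf
        have e2 : pochEval (u + j + 1) n = pochEval (u + j + 1) s * pochEval (u + (j+s+1)) (n-s) := by
          have h0 := poch_add (u + j + 1) s (n-s)
          rw [show s+(n-s) = n by omega] at h0
          rw [h0]
          push_cast; ring_nf
        rw [e1, e2]
        push_cast
        ring
      rw [Finset.sum_congr rfl hsum, ← Finset.mul_sum, ← Brec κ n]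
      rw [show 2*j+1+1 = 2*(j+1) by ring, Gc_even, Gc_odd]
      have e3 := poch_sub (u + j) n
      push_cast at e3 ⊢
      rw [show t + ((j:ℝ)+1) = t + j + 1 from by ring, show u + ((j:ℝ)+1) = u + j + 1 from by ring]
      linear_combination e3 * (pochEval (t + (j:ℝ) + 1) (n+1) * Bs κ (n+1))

open PowerSeries

lemma coeff_X_pow_mul'' (W : PowerSeries ℝ) (r N : ℕ) :
    (coeff N) (X^r * W) = if r ≤ N then coeff (N-r) W else 0 := by
  rw [mul_comm, PowerSeries.coeff_mul_X_pow']

lemma coeff_succ_X_mul' (W : PowerSeries ℝ) (n : ℕ) :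
    (coeff (n+1)) (X * W) = coeff n W := by
  have := coeff_X_pow_mul'' W 1 (n+1)
  simpa using this

lemma trunc_mul (A A' V : PowerSeries ℝ) (M : ℕ)
    (h : ∀ N ≤ M, coeff N A = coeff N A') :
    coeff M (A * V) = coeff M (A' * V) := by
  rw [PowerSeries.coeff_mul, PowerSeries.coeff_mul]
  refine Finset.sum_congr rfl fun p hp => ?_
  rw [h p.1 (by have := Finset.HasAntidiagonal.mem_antidiagonal.mp hp; omega)]

/-- even power series with coefficients `Gc`. -/
noncomputable def Gseries (t u : ℝ) (κ : ℕ → ℝ) (h : ℕ) : PowerSeries ℝ :=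
  PowerSeries.mk fun N => if N % 2 = 0 then Gc t u κ h (N/2) else 0

/-- even power series with the sum coefficients. -/
noncomputable def Tser (t u : ℝ) (κ : ℕ → ℝ) (h : ℕ) : PowerSeries ℝ :=
  PowerSeries.mk fun N => if N % 2 = 0 then
    ∑ s ∈ Finset.range (N/2), κ (s+1) * Cp t u h (2*s+1) * Gc t u κ (h + 2*s + 2) (N/2 - s - 1)
    else 0

lemma ESER (t u : ℝ) (κ : ℕ → ℝ) (h : ℕ) :
    Gseries t u κ (h+1) = Gseries t u κ h + Tser t u κ h := by
  ext N
  rw [map_add]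
  simp only [Gseries, Tser, PowerSeries.coeff_mk]
  by_cases hN : N % 2 = 0
  · simp only [if_pos hN]
    exact E_coeff t u κ h (N/2)
  · simp [if_neg hN]

lemma Gseries_const (t u : ℝ) (κ : ℕ → ℝ) (h : ℕ) :
    PowerSeries.constantCoeff (Gseries t u κ h) = 1 := by
  have : PowerSeries.constantCoeff (Gseries t u κ h) = coeff 0 (Gseries t u κ h) := by
    simp [PowerSeries.coeff_zero_eq_constantCoeff]
  rw [this]
  simp [Gseries, Gc_zero]

lemma Gseries_ne (t u : ℝ) (κ : ℕ → ℝ) (h : ℕ) :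
    PowerSeries.constantCoeff (Gseries t u κ h) ≠ 0 := by
  rw [Gseries_const]; norm_num

/-- closed form for the excursion series from height `j`. -/
noncomputable def EXser (t u : ℝ) (κ : ℕ → ℝ) (j : ℕ) : PowerSeries ℝ :=
  Cp t u 0 j • (X^j * Gseries t u κ (j+1) * (Gseries t u κ 0)⁻¹)

lemma coeff_EXser (t u : ℝ) (κ : ℕ → ℝ) (j n : ℕ) :
    coeff n (EXser t u κ j)
      = Cp t u 0 j * coeff n (X^j * Gseries t u κ (j+1) * (Gseries t u κ 0)⁻¹) := by
  rw [EXser, map_smul, smul_eq_mul]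

lemma EXser_ord (t u : ℝ) (κ : ℕ → ℝ) (j n : ℕ) (hn : n < j) :
    coeff n (EXser t u κ j) = 0 := by
  rw [coeff_EXser, mul_assoc, coeff_X_pow_mul'', if_neg (by omega), mul_zero]

lemma EXser_coeff_zero (t u : ℝ) (κ : ℕ → ℝ) (j : ℕ) :
    coeff 0 (EXser t u κ j) = if j = 0 then 1 else 0 := by
  rcases Nat.eq_zero_or_pos j with hj | hj
  · subst hj
    rw [coeff_EXser]
    simp only [pow_zero, one_mul, if_pos rfl]
    rw [PowerSeries.coeff_zero_eq_constantCoeff, map_mul, PowerSeries.constantCoeff_inv,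
        Gseries_const, Gseries_const]
    simp [Cp]
  · rw [EXser_ord t u κ j 0 hj, if_neg (by omega)]

/-- truncated expansion of `X^r * Tser h`. -/
lemma truncJ (t u : ℝ) (κ : ℕ → ℝ) (h r n N : ℕ) (hN : N ≤ n + 1) :
    coeff N (X^r * Tser t u κ h) =
      ∑ s ∈ Finset.range (n+1), κ (s+1) * Cp t u h (2*s+1) *
        coeff N (X^(r+2*s+2) * Gseries t u κ (h+2*s+2)) := by
  rw [coeff_X_pow_mul'']
  by_cases hr : r ≤ N
  · rw [if_pos hr]
    set M := N - r with hM
    rw [Tser, PowerSeries.coeff_mk]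
    by_cases hM2 : M % 2 = 0
    · rw [if_pos hM2]
      have step1 : ∑ s ∈ Finset.range (M/2),
            κ (s+1) * Cp t u h (2*s+1) * Gc t u κ (h + 2*s + 2) (M/2 - s - 1)
          = ∑ s ∈ Finset.range (M/2), κ (s+1) * Cp t u h (2*s+1) *
              coeff N (X^(r+2*s+2) * Gseries t u κ (h+2*s+2)) := by
        refine Finset.sum_congr rfl fun s hs => ?_
        have hs' : s < M/2 := Finset.mem_range.mp hs
        rw [coeff_X_pow_mul'', if_pos (by omega)]
        congr 2
        rw [Gseries, PowerSeries.coeff_mk, if_pos (by omega)]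
        congr 1
        omega
      rw [step1]
      refine Finset.sum_subset (Finset.range_subset_range.mpr (show M/2 ≤ n+1 by omega)) ?_
      intro s hs1 hs2
      have hs' : ¬ (s < M/2) := fun hh => hs2 (Finset.mem_range.mpr hh)
      rw [coeff_X_pow_mul'', if_neg (by omega), mul_zero]
    · rw [if_neg hM2]
      symm
      refine Finset.sum_eq_zero fun s hs => ?_
      rw [coeff_X_pow_mul'']
      by_cases hc : r + 2*s + 2 ≤ N
      · rw [if_pos hc, Gseries, PowerSeries.coeff_mk, if_neg (by omega), mul_zero]
      · rw [if_neg hc, mul_zero]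
  · rw [if_neg hr]
    symm
    refine Finset.sum_eq_zero fun s hs => ?_
    rw [coeff_X_pow_mul'', if_neg (by omega), mul_zero]

/-- the key juggling lemma. -/
lemma JUG (t u : ℝ) (κ : ℕ → ℝ) (V : PowerSeries ℝ) (h r n : ℕ) :
    coeff (n+1) (X^r * Tser t u κ h * V) =
      ∑ s ∈ Finset.range (n+1), κ (s+1) * Cp t u h (2*s+1) *
        coeff n (X^(r+2*s+1) * Gseries t u κ (h+2*s+2) * V) := by
  rw [trunc_mul (X^r * Tser t u κ h)
      (∑ s ∈ Finset.range (n+1), (κ (s+1) * Cp t u h (2*s+1)) •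
        (X^(r+2*s+2) * Gseries t u κ (h+2*s+2))) V (n+1)
      (fun N hN => by
        rw [truncJ t u κ h r n N hN, map_sum]
        refine Finset.sum_congr rfl fun s hs => ?_
        rw [map_smul, smul_eq_mul])]
  rw [Finset.sum_mul, map_sum]
  refine Finset.sum_congr rfl fun s hs => ?_
  rw [smul_mul_assoc, map_smul, smul_eq_mul]
  congr 1
  have : X^(r+2*s+2) * Gseries t u κ (h+2*s+2) * V
       = X * (X^(r+2*s+1) * Gseries t u κ (h+2*s+2) * V) := by
    rw [show r+2*s+2 = (r+2*s+1)+1 by ring, pow_succ]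
    ring
  rw [this, coeff_succ_X_mul']

lemma Cp_zero_succ (t u : ℝ) (j : ℕ) :
    Cp t u 0 (j+1) = Cp t u 0 j * dwt t u (j+1) := by
  rw [Cp]
  norm_num

/-- KEY recursion, `j+1` case. -/
lemma KEY1 (t u : ℝ) (κ : ℕ → ℝ) (j n : ℕ) :
    coeff (n+1) (EXser t u κ (j+1)) =
      dwt t u (j+1) * coeff n (EXser t u κ j) +
      ∑ s ∈ Finset.range (n+1), κ (s+1) * coeff n (EXser t u κ (j+2*s+2)) := by
  have hs : Gseries t u κ (j+2) = Gseries t u κ (j+1) + Tser t u κ (j+1) := ESER t u κ (j+1)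
  rw [coeff_EXser]
  rw [show X^(j+1) * Gseries t u κ (j+1+1) * (Gseries t u κ 0)⁻¹
      = X * (X^j * Gseries t u κ (j+1) * (Gseries t u κ 0)⁻¹)
        + X^(j+1) * Tser t u κ (j+1) * (Gseries t u κ 0)⁻¹ by
    rw [show j+1+1 = j+2 by ring, hs, pow_succ]; ring]
  rw [map_add, coeff_succ_X_mul', JUG, mul_add]
  congr 1
  · rw [coeff_EXser, Cp_zero_succ]; ring
  · rw [Finset.mul_sum]
    refine Finset.sum_congr rfl fun s hs' => ?_
    rw [coeff_EXser]
    have hcp : Cp t u 0 (j+2*s+2) = Cp t u 0 (j+1) * Cp t u (j+1) (2*s+1) := by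
      rw [show j+2*s+2 = (j+1) + (2*s+1) by ring, Cp_split]
      norm_num
    rw [hcp]
    rw [show j+1+2*s+1 = j+2*s+2 by ring, show j+1+2*s+2 = j+2*s+3 by ring,
        show j+2*s+2+1 = j+2*s+3 by ring]
    ring

/-- KEY recursion, base case `j = 0`. -/
lemma KEY0 (t u : ℝ) (κ : ℕ → ℝ) (n : ℕ) :
    coeff (n+1) (EXser t u κ 0) =
      ∑ s ∈ Finset.range (n+1), κ (s+1) * coeff n (EXser t u κ (2*s+1)) := by
  have hs : Gseries t u κ 1 = Gseries t u κ 0 + Tser t u κ 0 := ESER t u κ 0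
  rw [coeff_EXser]
  rw [show X^0 * Gseries t u κ (0+1) * (Gseries t u κ 0)⁻¹
      = Gseries t u κ 0 * (Gseries t u κ 0)⁻¹ + X^0 * Tser t u κ 0 * (Gseries t u κ 0)⁻¹ by
    rw [hs]; ring]
  rw [map_add, PowerSeries.mul_inv_cancel _ (Gseries_ne t u κ 0)]
  rw [JUG]
  rw [show (coeff (n+1)) (1 : PowerSeries ℝ) = 0 by simp [PowerSeries.coeff_one]]
  rw [zero_add]
  rw [show Cp t u 0 0 = (1:ℝ) from rfl, one_mul]
  refine Finset.sum_congr rfl fun s hs' => ?_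
  rw [coeff_EXser]
  rw [show 0+2*s+1 = 2*s+1 by ring, show 0+2*s+2 = 2*s+2 by ring, show 2*s+1+1 = 2*s+2 by ring]
  ring

-- ## Part C : combinatorial layer

lemma pHE_zero {n : ℕ} (f : Fin n → Fin (n+1)) : pathHeightE f 0 = 0 := by
  unfold pathHeightE
  rw [Finset.filter_false_of_mem (fun i _ => by omega)]
  simp

lemma pHE_succ {n : ℕ} (f : Fin n → Fin (n+1)) (m : ℕ) (hm : m < n) :
    pathHeightE f (m+1) = pathHeightE f m + (((f ⟨m, hm⟩ : ℕ) : ℤ) - 1) := by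
  unfold pathHeightE
  have : Finset.univ.filter (fun j : Fin n => (j : ℕ) < m+1)
      = insert ⟨m, hm⟩ (Finset.univ.filter (fun j : Fin n => (j : ℕ) < m)) := by
    ext i
    simp only [Finset.mem_insert, Finset.mem_filter, Finset.mem_univ, true_and, Fin.ext_iff]
    omega
  rw [this, Finset.sum_insert (by simp)]
  ring

lemma pHE_stable {n : ℕ} (f : Fin n → Fin (n+1)) (m : ℕ) (hm : n ≤ m) :
    pathHeightE f m = pathHeightE f n := by
  unfold pathHeightE
  congr 1
  ext i
  simp only [Finset.mem_filter, Finset.mem_univ, true_and]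
  omega

lemma pHE_step_lb {n : ℕ} (f : Fin n → Fin (n+1)) (m : ℕ) :
    pathHeightE f m - 1 ≤ pathHeightE f (m+1) := by
  by_cases hm : m < n
  · rw [pHE_succ f m hm]
    have : (0:ℤ) ≤ ((f ⟨m, hm⟩ : ℕ) : ℤ) := by positivity
    omega
  · rw [pHE_stable f (m+1) (by omega), pHE_stable f m (by omega)]
    omega

lemma pHE_lb {n : ℕ} (f : Fin n → Fin (n+1)) (m m' : ℕ) (h : m ≤ m') :
    pathHeightE f m - (m' - m : ℕ) ≤ pathHeightE f m' := by
  induction m' with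
  | zero =>
      have : m = 0 := by omega
      subst this; simp
  | succ m' ih =>
      rcases Nat.lt_or_ge m (m'+1) with h1 | h1
      · have h2 := ih (by omega)
        have h3 := pHE_step_lb f m'
        have : ((m'+1-m : ℕ) : ℤ) = (m'-m : ℕ) + 1 := by
          push_cast [Nat.sub_add_comm]
          omega
        omega
      · have : m = m'+1 := by omega
        subst this
        simp

lemma pHE_tail {n : ℕ} (f : Fin (n+1) → Fin (n+2)) (f' : Fin n → Fin (n+1))
    (hf' : ∀ i : Fin n, ((f' i : ℕ)) = (f i.succ : ℕ)) (m : ℕ) (hm : m ≤ n) :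
    pathHeightE f' m = pathHeightE f (m+1) - (((f 0 : ℕ) : ℤ) - 1) := by
  induction m with
  | zero =>
      rw [pHE_zero, show (0:ℕ)+1 = 1 by rfl]
      have h1 : pathHeightE f 1 = pathHeightE f 0 + (((f ⟨0, by omega⟩ : ℕ) : ℤ) - 1) :=
        pHE_succ f 0 (by omega)
      rw [h1, pHE_zero]
      have : (⟨0, by omega⟩ : Fin (n+1)) = 0 := rfl
      rw [this]
      ring
  | succ m ih =>
      have hm' : m < n := by omega
      rw [pHE_succ f' m hm', ih (by omega), pHE_succ f (m+1) (by omega)]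
      have : ((f' ⟨m, hm'⟩ : ℕ) : ℤ) = ((f ⟨m+1, by omega⟩ : ℕ) : ℤ) := by
        rw [hf' ⟨m, hm'⟩]
        congr 1
      rw [this]
      ring

/-- validity of an encoded odd Łukasiewicz path starting at relative height `j`. -/
def ValidFrom (j : ℤ) {n : ℕ} (f : Fin n → Fin (n + 1)) : Prop :=
  (∀ i, Odd (((f i : ℕ) : ℤ) - 1)) ∧
  (∀ m : ℕ, m ≤ n → 0 ≤ j + pathHeightE f m) ∧ j + pathHeightE f n = 0

/-- step weight. -/
noncomputable def wstep (t u : ℝ) (κ : ℕ → ℝ) (c : ℕ) (x : ℤ) : ℝ :=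
  if 2 ≤ c then κ (c/2) else dwt t u x

open scoped Classical in
/-- weighted sum over valid paths of length `n` from relative height `j`,
with absolute-height weight reference `x`. -/
noncomputable def WSum (t u : ℝ) (κ : ℕ → ℝ) (n : ℕ) (j x : ℤ) : ℝ :=
  ∑ f ∈ Finset.univ.filter (fun f : Fin n → Fin (n+1) => ValidFrom j f),
    ∏ i : Fin n, wstep t u κ (f i) (x + pathHeightE f i)

open scoped Classical in
lemma Wneg (t u : ℝ) (κ : ℕ → ℝ) (n : ℕ) (j x : ℤ) (hj : j < 0) :
    WSum t u κ n j x = 0 := by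
  rw [WSum]
  apply Finset.sum_eq_zero
  intro f hf
  rw [Finset.mem_filter] at hf
  have h0 := hf.2.2.1 0 (by omega)
  rw [pHE_zero] at h0
  omega

open scoped Classical in
lemma W0 (t u : ℝ) (κ : ℕ → ℝ) (j x : ℤ) :
    WSum t u κ 0 j x = if j = 0 then 1 else 0 := by
  rw [WSum]
  by_cases hj : j = 0
  · subst hj
    rw [if_pos rfl]
    rw [Finset.filter_true_of_mem (fun f _ =>
        ⟨fun i => i.elim0, fun m hm => by simp [show m = 0 by omega, pHE_zero],
         by simp [pHE_zero]⟩)]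
    rw [Finset.univ_unique, Finset.sum_singleton]
    simp
  · rw [if_neg hj]
    apply Finset.sum_eq_zero
    intro f hf
    rw [Finset.mem_filter] at hf
    have := hf.2.2.2
    rw [pHE_zero] at this
    omega

lemma step_bound {N : ℕ} (f : Fin (N+1) → Fin (N+2)) (j : ℤ) (hv : ValidFrom j f)
    (hj : 0 ≤ j) (i : Fin N) : (f i.succ : ℕ) ≤ N := by
  obtain ⟨hodd, hge, hend⟩ := hv
  have h1 : pathHeightE f (i+1+1) = pathHeightE f (i+1) + (((f ⟨i+1, by omega⟩ : ℕ) : ℤ) - 1) :=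
    pHE_succ f (i+1) (by omega)
  have hisucc : (⟨(i:ℕ)+1, by omega⟩ : Fin (N+1)) = i.succ := rfl
  rw [hisucc] at h1
  have h2 := pHE_lb f (i+1+1) (N+1) (by omega)
  have h3 := hge (i+1) (by omega)
  have h4 : ((N+1-(i+1+1) : ℕ) : ℤ) = N - 1 - i := by
    have : (i:ℕ) < N := i.isLt
    push_cast [Nat.cast_sub (by omega : i+1+1 ≤ N+1)]
    omega
  rw [h4] at h2
  omega

lemma valid_tail {n : ℕ} (f : Fin (n+1) → Fin (n+2)) (g : Fin n → Fin (n+1)) (j : ℤ)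
    (hg : ∀ i : Fin n, (g i : ℕ) = (f i.succ : ℕ))
    (hv : ValidFrom j f) : ValidFrom (j + ((f 0 : ℕ):ℤ) - 1) g := by
  obtain ⟨hodd, hge, hend⟩ := hv
  refine ⟨fun i => ?_, fun m hm => ?_, ?_⟩
  · have e : ((g i : ℕ):ℤ) = ((f i.succ : ℕ):ℤ) := congrArg (fun m : ℕ => (m:ℤ)) (hg i)
    rw [e]
    exact hodd i.succ
  · rw [pHE_tail f g hg m hm]
    have := hge (m+1) (by omega)
    omega
  · rw [pHE_tail f g hg n (le_refl n)]
    omega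

/-- drop the first step (junk value if out of bounds). -/
def tailPath {n : ℕ} (f : Fin (n+1) → Fin (n+2)) : Fin n → Fin (n+1) :=
  fun i => if h : (f i.succ : ℕ) < n+1 then ⟨(f i.succ : ℕ), h⟩ else ⟨0, by omega⟩

lemma tailPath_val {n : ℕ} (f : Fin (n+1) → Fin (n+2)) (i : Fin n)
    (h : (f i.succ : ℕ) < n+1) : (tailPath f i : ℕ) = (f i.succ : ℕ) := by
  rw [tailPath, dif_pos h]

/-- prepend a step. -/
def consPath {n : ℕ} (c : Fin (n+2)) (g : Fin n → Fin (n+1)) : Fin (n+1) → Fin (n+2) :=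
  Fin.cases c (fun i => ⟨(g i : ℕ), by omega⟩)

lemma consPath_zero {n : ℕ} (c : Fin (n+2)) (g : Fin n → Fin (n+1)) :
    consPath c g 0 = c := rfl

lemma consPath_succ {n : ℕ} (c : Fin (n+2)) (g : Fin n → Fin (n+1)) (i : Fin n) :
    (consPath c g i.succ : ℕ) = (g i : ℕ) := by
  rw [consPath, Fin.cases_succ]

lemma valid_cons {n : ℕ} (c : ℕ) (hc : c < n+2) (hcp : c % 2 = 0) (g : Fin n → Fin (n+1))
    (j : ℤ) (hj : 0 ≤ j) (hjc : 0 ≤ j + c - 1)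
    (hv : ValidFrom (j + c - 1) g) : ValidFrom j (consPath ⟨c, hc⟩ g) := by
  obtain ⟨hodd, hge, hend⟩ := hv
  have hzero : ((consPath ⟨c, hc⟩ g 0 : ℕ) : ℤ) = c := rfl
  have htail : ∀ m ≤ n, pathHeightE g m
      = pathHeightE (consPath ⟨c, hc⟩ g) (m+1) - (((consPath ⟨c, hc⟩ g 0 : ℕ):ℤ) - 1) :=
    fun m hm => pHE_tail (consPath ⟨c, hc⟩ g) g (fun i => consPath_succ ⟨c, hc⟩ g i) m hm
  refine ⟨?_, fun m hm => ?_, ?_⟩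
  · intro i
    rcases Fin.eq_zero_or_eq_succ i with rfl | ⟨i', rfl⟩
    · rw [show ((consPath ⟨c, hc⟩ g 0 : ℕ):ℤ) = (c:ℤ) from hzero, Int.odd_iff]
      omega
    · rw [show ((consPath ⟨c, hc⟩ g i'.succ : ℕ):ℤ) = ((g i' : ℕ):ℤ) from
        congrArg (fun m : ℕ => (m:ℤ)) (consPath_succ ⟨c, hc⟩ g i')]
      exact hodd i'
  · cases m with
    | zero => rw [pHE_zero]; omega
    | succ m =>
        have hm' : m ≤ n := by omega
        have h1 := htail m hm'
        have h2 := hge m hm'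
        rw [hzero] at h1
        omega
  · have h1 := htail n (le_refl n)
    rw [hzero] at h1
    omega

open scoped Classical in
lemma Wrec (t u : ℝ) (κ : ℕ → ℝ) (n : ℕ) (j x : ℤ) (hj : 0 ≤ j) :
    WSum t u κ (n+1) j x =
      ∑ c ∈ Finset.range (n+2),
        if c % 2 = 0 then wstep t u κ c x * WSum t u κ n (j + c - 1) (x + c - 1) else 0 := by
  rw [WSum]
  rw [← Finset.sum_fiberwise_of_maps_to (g := fun f : Fin (n+1) → Fin (n+2) => (f 0 : ℕ))
      (t := Finset.range (n+2)) (fun f _ => Finset.mem_range.mpr (f 0).isLt)]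
  refine Finset.sum_congr rfl fun c hc => ?_
  have hcn : c < n + 2 := Finset.mem_range.mp hc
  by_cases hcp : c % 2 = 0
  · rw [if_pos hcp]
    by_cases hneg : j + c - 1 < 0
    · rw [Wneg t u κ n _ _ hneg, mul_zero]
      apply Finset.sum_eq_zero
      intro f hf
      exfalso
      rw [Finset.mem_filter] at hf
      obtain ⟨hf1, hf2⟩ := hf
      rw [Finset.mem_filter] at hf1
      obtain ⟨-, hvf⟩ := hf1
      have h1 := hvf.2.1 1 (by omega)
      have h2 : pathHeightE f 1 = pathHeightE f 0 + (((f ⟨0, by omega⟩ : ℕ) : ℤ) - 1) :=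
        pHE_succ f 0 (by omega)
      rw [pHE_zero] at h2
      have h3 : (⟨0, by omega⟩ : Fin (n+1)) = 0 := rfl
      rw [h3, hf2] at h2
      omega
    · push_neg at hneg
      rw [WSum, Finset.mul_sum]
      refine Finset.sum_bij' (i := fun f _ => tailPath f) (j := fun g _ => consPath ⟨c, hcn⟩ g)
        ?_ ?_ ?_ ?_ ?_
      · -- maps into
        intro f hf
        rw [Finset.mem_filter] at hf
        obtain ⟨hf1, hf2⟩ := hf
        rw [Finset.mem_filter] at hf1
        have hb : ∀ i : Fin n, (f i.succ : ℕ) < n+1 := fun i => by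
          have := step_bound f j hf1.2 hj i; omega
        have hvals : ∀ i : Fin n, (tailPath f i : ℕ) = (f i.succ : ℕ) :=
          fun i => tailPath_val f i (hb i)
        rw [Finset.mem_filter]
        refine ⟨Finset.mem_univ _, ?_⟩
        have h := valid_tail f (tailPath f) j hvals hf1.2
        rw [show ((f 0 : ℕ):ℤ) = (c:ℤ) by rw [hf2]] at h
        exact h
      · -- maps back
        intro g hg
        rw [Finset.mem_filter] at hg
        rw [Finset.mem_filter]
        refine ⟨?_, rfl⟩
        rw [Finset.mem_filter]
        exact ⟨Finset.mem_univ _, valid_cons c hcn hcp g j hj hneg hg.2⟩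
      · -- left inverse
        intro f hf
        rw [Finset.mem_filter] at hf
        obtain ⟨hf1, hf2⟩ := hf
        rw [Finset.mem_filter] at hf1
        have hb : ∀ i : Fin n, (f i.succ : ℕ) < n+1 := fun i => by
          have := step_bound f j hf1.2 hj i; omega
        funext i
        rcases Fin.eq_zero_or_eq_succ i with rfl | ⟨i', rfl⟩
        · exact (consPath_zero _ _).trans (Fin.ext hf2.symm)
        · apply Fin.ext
          rw [consPath_succ, tailPath_val f i' (hb i')]
      · -- right inverse
        intro g hg
        funext i
        apply Fin.ext
        have hlt : (consPath ⟨c, hcn⟩ g i.succ : ℕ) < n+1 := by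
          rw [consPath_succ]
          exact (g i).isLt
        rw [tailPath_val _ i hlt, consPath_succ]
      · -- weights
        intro f hf
        rw [Finset.mem_filter] at hf
        obtain ⟨hf1, hf2⟩ := hf
        rw [Finset.mem_filter] at hf1
        have hb : ∀ i : Fin n, (f i.succ : ℕ) < n+1 := fun i => by
          have := step_bound f j hf1.2 hj i; omega
        have hvals : ∀ i : Fin n, (tailPath f i : ℕ) = (f i.succ : ℕ) :=
          fun i => tailPath_val f i (hb i)
        rw [Fin.prod_univ_succ]
        congr 1
        · rw [show pathHeightE f ((0 : Fin (n+1)) : ℕ) = 0 from pHE_zero f, add_zero, hf2]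
        · refine Finset.prod_congr rfl fun i _ => ?_
          have hph := pHE_tail f (tailPath f) hvals i (by omega)
          rw [hvals i]
          have hsucc : ((i.succ : Fin (n+1)) : ℕ) = (i:ℕ)+1 := rfl
          rw [hsucc, hph, hf2]
          congr 1
          ring
  · rw [if_neg hcp]
    apply Finset.sum_eq_zero
    intro f hf
    exfalso
    rw [Finset.mem_filter] at hf
    obtain ⟨hf1, hf2⟩ := hf
    rw [Finset.mem_filter] at hf1
    have hodd := hf1.2.1 0
    rw [hf2, Int.odd_iff] at hodd
    omega

lemma Wparity (t u : ℝ) (κ : ℕ → ℝ) : ∀ (n : ℕ) (j x : ℤ), (j + n) % 2 ≠ 0 →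
    WSum t u κ n j x = 0 := by
  intro n
  induction n with
  | zero =>
      intro j x hj
      rw [W0, if_neg (by omega)]
  | succ n ih =>
      intro j x hj
      rcases lt_or_ge j 0 with hneg | hpos
      · exact Wneg t u κ (n+1) j x hneg
      · rw [Wrec t u κ n j x hpos]
        apply Finset.sum_eq_zero
        intro c hc
        by_cases hcp : c % 2 = 0
        · rw [if_pos hcp, ih (j + c - 1) (x + c - 1) (by omega), mul_zero]
        · rw [if_neg hcp]

lemma sum_even_range (g : ℕ → ℝ) (m : ℕ) :
    ∑ c ∈ Finset.range m, (if c % 2 = 0 then g c else 0)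
      = ∑ s ∈ Finset.range ((m+1)/2), g (2*s) := by
  induction m with
  | zero => simp
  | succ m ih =>
      rw [Finset.sum_range_succ, ih]
      by_cases hm : m % 2 = 0
      · rw [if_pos hm]
        have h1 : (m+1+1)/2 = (m+1)/2 + 1 := by omega
        rw [h1, Finset.sum_range_succ]
        have h2 : 2*((m+1)/2) = m := by omega
        rw [h2]
      · rw [if_neg hm, add_zero]
        have h1 : (m+1+1)/2 = (m+1)/2 := by omega
        rw [h1]

open scoped Classical in
lemma CF (t u : ℝ) (κ : ℕ → ℝ) : ∀ (n j : ℕ),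
    WSum t u κ n (j:ℤ) (j:ℤ) = PowerSeries.coeff n (EXser t u κ j) := by
  intro n
  induction n with
  | zero =>
      intro j
      rw [W0, EXser_coeff_zero]
      by_cases hj : j = 0
      · rw [if_pos (by exact_mod_cast hj), if_pos hj]
      · rw [if_neg (by exact_mod_cast hj), if_neg hj]
  | succ n ih =>
      have hbig : ∀ (j : ℕ), ∀ s ∈ Finset.range (n + 1), s ∉ Finset.range ((n + 1) / 2) →
          κ (s+1) * PowerSeries.coeff n (EXser t u κ (j+2*s+1)) = 0 := by
        intro j s hs1 hs2
        rw [EXser_ord t u κ _ n (by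
          simp only [Finset.mem_range] at hs1 hs2
          omega), mul_zero]
      intro j
      rw [Wrec t u κ n (j:ℤ) (j:ℤ) (by positivity)]
      cases j with
      | zero =>
          have hstep : ∀ c ∈ Finset.range (n+2),
              (if c % 2 = 0 then
                wstep t u κ c ((0:ℕ):ℤ) * WSum t u κ n (((0:ℕ):ℤ) + c - 1) (((0:ℕ):ℤ) + c - 1)
               else 0)
              = (if c % 2 = 0 then
                  (if c = 0 then 0
                   else κ (c/2) * PowerSeries.coeff n (EXser t u κ (c-1))) else 0) := by
            intro c hc
            by_cases hcp : c % 2 = 0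
            · rw [if_pos hcp, if_pos hcp]
              by_cases hc0 : c = 0
              · subst hc0
                rw [if_pos rfl]
                rw [Wneg t u κ n _ _ (by norm_num), mul_zero]
              · rw [if_neg hc0]
                have hc2 : 2 ≤ c := by omega
                have e : ((0:ℕ):ℤ) + c - 1 = ((c - 1 : ℕ) : ℤ) := by
                  push_cast [show 1 ≤ c by omega]
                  omega
                rw [e, ih (c-1), wstep, if_pos hc2]
            · rw [if_neg hcp, if_neg hcp]
          rw [Finset.sum_congr rfl hstep, sum_even_range, KEY0]
          have h1 : (n+2+1)/2 = (n+1)/2 + 1 := by omega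
          rw [h1, Finset.sum_range_succ']
          have hz : (if 2*0 = 0 then (0:ℝ)
              else κ ((2*0)/2) * PowerSeries.coeff n (EXser t u κ (2*0-1))) = 0 := if_pos rfl
          rw [hz, add_zero]
          have hsmall : ∀ s ∈ Finset.range ((n+1)/2),
              (if 2*(s+1) = 0 then (0:ℝ)
               else κ ((2*(s+1))/2) * PowerSeries.coeff n (EXser t u κ (2*(s+1)-1)))
              = κ (s+1) * PowerSeries.coeff n (EXser t u κ (0+2*s+1)) := by
            intro s hs
            rw [if_neg (by omega), show (2*(s+1))/2 = s+1 by omega,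
                show 2*(s+1)-1 = 0+2*s+1 by omega]
          rw [Finset.sum_congr rfl hsmall,
              Finset.sum_subset (Finset.range_subset_range.mpr (by omega : (n+1)/2 ≤ n+1)) (hbig 0)]
          refine Finset.sum_congr rfl fun s hs => ?_
          rw [show 0+2*s+1 = 2*s+1 by omega]
      | succ j' =>
          have hstep : ∀ c ∈ Finset.range (n+2),
              (if c % 2 = 0 then
                wstep t u κ c ((j'+1:ℕ):ℤ)
                  * WSum t u κ n (((j'+1:ℕ):ℤ) + c - 1) (((j'+1:ℕ):ℤ) + c - 1)
               else 0)
              = (if c % 2 = 0 then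
                  (if c = 0 then dwt t u (j'+1) * PowerSeries.coeff n (EXser t u κ j')
                   else κ (c/2) * PowerSeries.coeff n (EXser t u κ (j'+1+c-1))) else 0) := by
            intro c hc
            by_cases hcp : c % 2 = 0
            · rw [if_pos hcp, if_pos hcp]
              by_cases hc0 : c = 0
              · subst hc0
                rw [if_pos rfl]
                have e : ((j'+1:ℕ):ℤ) + (0:ℕ) - 1 = ((j' : ℕ) : ℤ) := by push_cast; omega
                rw [e, ih j', wstep, if_neg (by omega)]
                norm_cast
              · rw [if_neg hc0]
                have hc2 : 2 ≤ c := by omega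
                have e : ((j'+1:ℕ):ℤ) + c - 1 = ((j' + 1 + c - 1 : ℕ) : ℤ) := by
                  push_cast [show 1 ≤ j' + 1 + c by omega]
                  omega
                rw [e, ih (j'+1+c-1), wstep, if_pos hc2]
            · rw [if_neg hcp, if_neg hcp]
          rw [Finset.sum_congr rfl hstep, sum_even_range, KEY1]
          have h1 : (n+2+1)/2 = (n+1)/2 + 1 := by omega
          rw [h1, Finset.sum_range_succ']
          have hz : (if 2*0 = 0 then dwt t u (j'+1) * PowerSeries.coeff n (EXser t u κ j')
              else κ ((2*0)/2) * PowerSeries.coeff n (EXser t u κ (j'+1+2*0-1)))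
              = dwt t u (j'+1) * PowerSeries.coeff n (EXser t u κ j') := if_pos rfl
          rw [hz]
          have hsmall : ∀ s ∈ Finset.range ((n+1)/2),
              (if 2*(s+1) = 0 then dwt t u (j'+1) * PowerSeries.coeff n (EXser t u κ j')
               else κ ((2*(s+1))/2)
                  * PowerSeries.coeff n (EXser t u κ (j'+1+2*(s+1)-1)))
              = κ (s+1) * PowerSeries.coeff n (EXser t u κ ((j'+1)+2*s+1)) := by
            intro s hs
            rw [if_neg (by omega), show (2*(s+1))/2 = s+1 by omega,
                show j'+1+2*(s+1)-1 = (j'+1)+2*s+1 by omega]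
          rw [Finset.sum_congr rfl hsmall,
              Finset.sum_subset (Finset.range_subset_range.mpr (by omega : (n+1)/2 ≤ n+1))
                (hbig (j'+1))]
          rw [add_comm]
          congr 1
          refine Finset.sum_congr rfl fun s hs => ?_
          rw [show (j'+1)+2*s+1 = j'+2*s+2 by omega]

-- ## Part D : analytic layer (fexp)

lemma coeff_pow_zero_of_lt (F : PowerSeries ℝ) (hF : PowerSeries.constantCoeff F = 0)
    {k M : ℕ} (h : M < k) : PowerSeries.coeff M (F^k) = 0 := by
  have h1 : (PowerSeries.X : PowerSeries ℝ)^k ∣ F^k :=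
    pow_dvd_pow_of_dvd (PowerSeries.X_dvd_iff.mpr hF) k
  exact PowerSeries.X_pow_dvd_iff.mp h1 M h

lemma coeff_fexp (F : PowerSeries ℝ) (hF : PowerSeries.constantCoeff F = 0) (M L : ℕ)
    (hL : M + 1 ≤ L) :
    PowerSeries.coeff M (fexp F)
      = ∑ k ∈ Finset.range L, (PowerSeries.coeff M (F ^ k)) / (k.factorial : ℝ) := by
  rw [fexp, PowerSeries.coeff_mk]
  refine Finset.sum_subset (Finset.range_subset_range.mpr hL) ?_
  intro k hk1 hk2
  simp only [Finset.mem_range] at hk1 hk2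
  rw [coeff_pow_zero_of_lt F hF (by omega), zero_div]

lemma dpow (F : PowerSeries ℝ) : ∀ (k : ℕ),
    PowerSeries.derivativeFun (F^(k+1)) = (k+1) • (F^k * PowerSeries.derivativeFun F) := by
  intro k
  induction k with
  | zero => simp
  | succ k ih =>
      rw [show F^(k+1+1) = F^(k+1) * F by ring, PowerSeries.derivativeFun_mul, ih]
      rw [smul_comm (F) ((k+1):ℕ) (F^k * PowerSeries.derivativeFun F)]
      rw [smul_eq_mul, smul_eq_mul, show F * (F^k * PowerSeries.derivativeFun F)
        = F^(k+1) * PowerSeries.derivativeFun F by ring]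
      rw [succ_nsmul ((F^(k+1) * PowerSeries.derivativeFun F)) (k+1)]
      ring

lemma coeff_dpow (F : PowerSeries ℝ) (k N : ℕ) :
    PowerSeries.coeff N (PowerSeries.derivativeFun (F^(k+1)))
      = ((k:ℝ)+1) * PowerSeries.coeff N (F^k * PowerSeries.derivativeFun F) := by
  rw [dpow F k, map_nsmul, nsmul_eq_mul]
  push_cast
  ring

lemma coeff_derivativeFun' (g : PowerSeries ℝ) (n : ℕ) :
    PowerSeries.coeff n g.derivativeFun = PowerSeries.coeff (n+1) g * (n+1) :=
  PowerSeries.coeff_derivative g n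

lemma DFEXP (F : PowerSeries ℝ) (hF : PowerSeries.constantCoeff F = 0) (N : ℕ) :
    ((N:ℝ)+1) * PowerSeries.coeff (N+1) (fexp F) =
      ∑ p ∈ Finset.range (N+1),
        ((p:ℝ)+1) * PowerSeries.coeff (p+1) F * PowerSeries.coeff (N-p) (fexp F) := by
  have key : ∀ k : ℕ, PowerSeries.coeff N (F^k * PowerSeries.derivativeFun F)
      = ∑ p ∈ Finset.range (N+1),
          ((p:ℝ)+1) * PowerSeries.coeff (p+1) F * PowerSeries.coeff (N-p) (F^k) := by
    intro k
    rw [mul_comm, PowerSeries.coeff_mul,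
        Finset.Nat.sum_antidiagonal_eq_sum_range_succ_mk]
    refine Finset.sum_congr rfl fun p hp => ?_
    rw [coeff_derivativeFun']
    ring
  calc ((N:ℝ)+1) * PowerSeries.coeff (N+1) (fexp F)
      = ∑ k ∈ Finset.range (N+2),
          (((N:ℝ)+1) * PowerSeries.coeff (N+1) (F^k)) / (k.factorial : ℝ) := by
        rw [coeff_fexp F hF (N+1) (N+2) (by omega), Finset.mul_sum]
        refine Finset.sum_congr rfl fun k _ => ?_
        ring
    _ = ∑ k ∈ Finset.range (N+2),
          (PowerSeries.coeff N (PowerSeries.derivativeFun (F^k))) / (k.factorial : ℝ) := by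
        refine Finset.sum_congr rfl fun k _ => ?_
        rw [coeff_derivativeFun']
        ring
    _ = ∑ k ∈ Finset.range (N+1),
          (PowerSeries.coeff N (PowerSeries.derivativeFun (F^(k+1)))) / ((k+1).factorial : ℝ)
        := by
        rw [Finset.sum_range_succ']
        have h0 : PowerSeries.coeff N (PowerSeries.derivativeFun (F^0)) = 0 := by
          rw [pow_zero, coeff_derivativeFun', PowerSeries.coeff_one,
              if_neg (by omega)]
          ring
        rw [h0, zero_div, add_zero]
    _ = ∑ k ∈ Finset.range (N+1),
          (PowerSeries.coeff N (F^k * PowerSeries.derivativeFun F)) / (k.factorial : ℝ) := by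
        refine Finset.sum_congr rfl fun k _ => ?_
        rw [coeff_dpow F k N, Nat.factorial_succ]
        have hk : ((k.factorial : ℝ)) ≠ 0 := by exact_mod_cast k.factorial_ne_zero
        field_simp
        push_cast
        ring
    _ = ∑ k ∈ Finset.range (N+1), ∑ p ∈ Finset.range (N+1),
          (((p:ℝ)+1) * PowerSeries.coeff (p+1) F * PowerSeries.coeff (N-p) (F^k))
            / (k.factorial : ℝ) := by
        refine Finset.sum_congr rfl fun k _ => ?_
        rw [key k, Finset.sum_div]
    _ = ∑ p ∈ Finset.range (N+1),
        ((p:ℝ)+1) * PowerSeries.coeff (p+1) F * PowerSeries.coeff (N-p) (fexp F) := by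
        rw [Finset.sum_comm]
        refine Finset.sum_congr rfl fun p hp => ?_
        rw [coeff_fexp F hF (N-p) (N+1) (by
          simp only [Finset.mem_range] at hp
          omega), Finset.mul_sum]
        refine Finset.sum_congr rfl fun k _ => ?_
        ring

-- ## Part E : applications of DFEXP and final algebra

lemma sum_odd_range (g : ℕ → ℝ) (m : ℕ) :
    ∑ c ∈ Finset.range m, (if c % 2 = 1 then g c else 0)
      = ∑ s ∈ Finset.range (m/2), g (2*s+1) := by
  induction m with
  | zero => simp
  | succ m ih =>
      rw [Finset.sum_range_succ, ih]
      by_cases hm : m % 2 = 1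
      · rw [if_pos hm]
        have h1 : (m+1)/2 = m/2 + 1 := by omega
        rw [h1, Finset.sum_range_succ]
        have h2 : 2*(m/2)+1 = m := by omega
        rw [h2]
      · rw [if_neg hm, add_zero]
        have h1 : (m+1)/2 = m/2 := by omega
        rw [h1]

lemma evenSeries_coeff (x : ℕ → ℝ) (N : ℕ) :
    PowerSeries.coeff N (evenSeries x)
      = if N ≠ 0 ∧ N % 2 = 0 then x (N/2) / ((N/2 : ℕ) : ℝ) else 0 := by
  rw [evenSeries, PowerSeries.coeff_mk]

lemma evenSeries_const (x : ℕ → ℝ) : PowerSeries.constantCoeff (evenSeries x) = 0 := by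
  rw [← PowerSeries.coeff_zero_eq_constantCoeff_apply, evenSeries_coeff]
  norm_num

lemma Gc_zero_idx (t u : ℝ) (κ : ℕ → ℝ) (n : ℕ) :
    Gc t u κ 0 n = pochEval t n * pochEval u n * Bs κ n := by
  rw [Gc]
  norm_num

lemma Gc_one_idx (t u : ℝ) (κ : ℕ → ℝ) (n : ℕ) :
    Gc t u κ 1 n = pochEval (t+1) n * pochEval u n * Bs κ n := by
  rw [Gc]
  norm_num

section App
variable (t u : ℝ) (κ a mm : ℕ → ℝ)

/-- From h1: the even coefficients of `coeffSeriesTU` are `Bs κ`. -/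
lemma coeffTU_eq_B (h1 : fexp (evenSeries κ) = coeffSeriesTU t u a) :
    ∀ n, PowerSeries.coeff (2*n) (coeffSeriesTU t u a) = Bs κ n := by
  intro n
  induction n using Nat.strong_induction_on with
  | _ n ih =>
    cases n with
    | zero =>
        rw [coeffSeriesTU, PowerSeries.coeff_mk]
        norm_num [Bs]
    | succ K =>
        have hD := DFEXP (evenSeries κ) (evenSeries_const κ) (2*K+1)
        rw [h1] at hD
        have hterm : ∀ p ∈ Finset.range (2*K+2),
            ((p:ℝ)+1) * PowerSeries.coeff (p+1) (evenSeries κ)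
              * PowerSeries.coeff (2*K+1-p) (coeffSeriesTU t u a)
            = (if p % 2 = 1 then
                2 * κ ((p+1)/2) * PowerSeries.coeff (2*K+1-p) (coeffSeriesTU t u a)
               else 0) := by
          intro p hp
          rw [evenSeries_coeff]
          by_cases hpp : p % 2 = 1
          · rw [if_pos (by omega : (p+1) ≠ 0 ∧ (p+1) % 2 = 0), if_pos hpp]
            have h2 : ((p+1)/2 : ℕ) ≠ 0 := by omega
            have h3 : ((((p+1)/2 : ℕ)) : ℝ) ≠ 0 := by exact_mod_cast h2
            have h4 : ((p:ℝ)+1) = 2 * ((((p+1)/2 : ℕ)) : ℝ) := by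
              have : p + 1 = 2 * ((p+1)/2) := by omega
              exact_mod_cast this
            rw [h4]
            field_simp
          · rw [if_neg (by omega : ¬((p+1) ≠ 0 ∧ (p+1) % 2 = 0)), if_neg hpp]
            ring
        rw [Finset.sum_congr rfl hterm, sum_odd_range] at hD
        have hhalf : (2*K+2)/2 = K+1 := by omega
        rw [hhalf] at hD
        have hsum : ∀ s ∈ Finset.range (K+1),
            2 * κ ((2*s+1+1)/2)
              * PowerSeries.coeff (2*K+1-(2*s+1)) (coeffSeriesTU t u a)
            = 2 * (κ (s+1) * Bs κ (K-s)) := by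
          intro s hs
          simp only [Finset.mem_range] at hs
          rw [show (2*s+1+1)/2 = s+1 by omega, show 2*K+1-(2*s+1) = 2*(K-s) by omega,
              ih (K-s) (by omega)]
          ring
        rw [Finset.sum_congr rfl hsum, ← Finset.mul_sum, ← Brec κ K] at hD
        rw [show 2*K+1+1 = 2*(K+1) by ring] at hD
        have h5 : ((2*K+1:ℕ):ℝ) + 1 = 2*((K:ℝ)+1) := by push_cast; ring
        rw [h5] at hD
        have h7 : (2:ℝ)*((K:ℝ)+1) ≠ 0 := by positivity
        apply mul_left_cancel₀ h7
        linear_combination hD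
end App


section Final
variable (t u : ℝ) (κ a mm : ℕ → ℝ)

lemma a_eq_Gc (ht : ∀ i : ℕ, t + i ≠ 0) (hu : ∀ i : ℕ, u + i ≠ 0)
    (h1 : fexp (evenSeries κ) = coeffSeriesTU t u a) :
    ∀ n, 1 ≤ n → a n = Gc t u κ 0 n := by
  intro n hn
  have hB := coeffTU_eq_B t u κ a h1 n
  rw [coeffSeriesTU, PowerSeries.coeff_mk, if_neg (by omega), if_pos (by omega),
      show (2*n)/2 = n by omega] at hB
  rw [Gc_zero_idx]
  have hne : pochEval t n * pochEval u n ≠ 0 :=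
    mul_ne_zero (poch_ne_zero t ht n) (poch_ne_zero u hu n)
  rw [div_eq_iff hne] at hB
  rw [hB, pochEval]
  ring

lemma coeffA_eq (ht : ∀ i : ℕ, t + i ≠ 0) (hu : ∀ i : ℕ, u + i ≠ 0)
    (h1 : fexp (evenSeries κ) = coeffSeriesTU t u a) :
    ∀ k, PowerSeries.coeff (2*k) (coeffSeries a) = Gc t u κ 0 k := by
  intro k
  cases k with
  | zero =>
      rw [coeffSeries, PowerSeries.coeff_mk, if_pos (by omega), Gc_zero]
  | succ K =>
      rw [coeffSeries, PowerSeries.coeff_mk, if_neg (by omega), if_pos (by omega),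
          show (2*(K+1))/2 = K+1 by omega]
      exact a_eq_Gc t u κ a ht hu h1 (K+1) (by omega)

lemma arec (ht : ∀ i : ℕ, t + i ≠ 0) (hu : ∀ i : ℕ, u + i ≠ 0)
    (h1 : fexp (evenSeries κ) = coeffSeriesTU t u a)
    (h2 : fexp (PowerSeries.C t * evenSeries mm) = coeffSeries a) :
    ∀ K : ℕ, ((K:ℝ)+1) * Gc t u κ 0 (K+1)
      = t * ∑ s ∈ Finset.range (K+1), mm (s+1) * Gc t u κ 0 (K-s) := by
  intro K
  have hconst : PowerSeries.constantCoeff (PowerSeries.C t * evenSeries mm) = 0 := by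
    rw [map_mul, PowerSeries.constantCoeff_C, evenSeries_const, mul_zero]
  have hD := DFEXP (PowerSeries.C t * evenSeries mm) hconst (2*K+1)
  rw [h2] at hD
  have hterm : ∀ p ∈ Finset.range (2*K+2),
      ((p:ℝ)+1) * PowerSeries.coeff (p+1) (PowerSeries.C t * evenSeries mm)
        * PowerSeries.coeff (2*K+1-p) (coeffSeries a)
      = (if p % 2 = 1 then
          2 * t * mm ((p+1)/2) * PowerSeries.coeff (2*K+1-p) (coeffSeries a)
         else 0) := by
    intro p hp
    rw [PowerSeries.coeff_C_mul, evenSeries_coeff]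
    by_cases hpp : p % 2 = 1
    · rw [if_pos (by omega : (p+1) ≠ 0 ∧ (p+1) % 2 = 0), if_pos hpp]
      have h2' : ((p+1)/2 : ℕ) ≠ 0 := by omega
      have h3 : ((((p+1)/2 : ℕ)) : ℝ) ≠ 0 := by exact_mod_cast h2'
      have h4 : ((p:ℝ)+1) = 2 * ((((p+1)/2 : ℕ)) : ℝ) := by
        have : p + 1 = 2 * ((p+1)/2) := by omega
        exact_mod_cast this
      rw [h4]
      field_simp
    · rw [if_neg (by omega : ¬((p+1) ≠ 0 ∧ (p+1) % 2 = 0)), if_neg hpp]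
      ring
  rw [Finset.sum_congr rfl hterm, sum_odd_range, show (2*K+2)/2 = K+1 by omega] at hD
  have hsum : ∀ s ∈ Finset.range (K+1),
      2 * t * mm ((2*s+1+1)/2) * PowerSeries.coeff (2*K+1-(2*s+1)) (coeffSeries a)
      = 2 * (t * (mm (s+1) * Gc t u κ 0 (K-s))) := by
    intro s hs
    rw [show (2*s+1+1)/2 = s+1 by omega, show 2*K+1-(2*s+1) = 2*(K-s) by omega,
        coeffA_eq t u κ a ht hu h1 (K-s)]
    ring
  rw [Finset.sum_congr rfl hsum, ← Finset.mul_sum, ← Finset.mul_sum] at hD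
  rw [show 2*K+1+1 = 2*(K+1) by ring] at hD
  rw [coeffA_eq t u κ a ht hu h1 (K+1)] at hD
  have h5 : ((2*K+1:ℕ):ℝ) + 1 = 2*((K:ℝ)+1) := by push_cast; ring
  rw [h5] at hD
  apply mul_left_cancel₀ (show (2:ℝ) ≠ 0 by norm_num)
  linear_combination hD

lemma EXmul : EXser t u κ 0 * Gseries t u κ 0 = Gseries t u κ 1 := by
  rw [EXser, show Cp t u 0 0 = (1:ℝ) from rfl, one_smul, pow_zero, one_mul, mul_assoc,
      PowerSeries.inv_mul_cancel _ (Gseries_ne t u κ 0), mul_one]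

lemma Prec : ∀ K : ℕ, ((K:ℝ)+1) * Gc t u κ 0 (K+1)
    = t * ∑ s ∈ Finset.range (K+1),
        PowerSeries.coeff (2*(s+1)) (EXser t u κ 0) * Gc t u κ 0 (K-s) := by
  intro K
  set n := K + 1 with hn
  -- step 1 : coefficient of the product
  have step1 : PowerSeries.coeff (2*n) (EXser t u κ 0 * Gseries t u κ 0)
      = ∑ i ∈ Finset.range (n+1),
          PowerSeries.coeff (2*i) (EXser t u κ 0) * Gc t u κ 0 (n-i) := by
    rw [PowerSeries.coeff_mul, Finset.Nat.sum_antidiagonal_eq_sum_range_succ_mk]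
    have hterm : ∀ p ∈ Finset.range (2*n+1),
        PowerSeries.coeff p (EXser t u κ 0) * PowerSeries.coeff (2*n-p) (Gseries t u κ 0)
        = (if p % 2 = 0 then
            PowerSeries.coeff p (EXser t u κ 0) * Gc t u κ 0 ((2*n-p)/2) else 0) := by
      intro p hp
      simp only [Finset.mem_range] at hp
      by_cases hpp : p % 2 = 0
      · rw [if_pos hpp, Gseries, PowerSeries.coeff_mk, if_pos (by omega)]
      · rw [if_neg hpp, Gseries, PowerSeries.coeff_mk, if_neg (by omega), mul_zero]
    rw [Finset.sum_congr rfl hterm, sum_even_range, show (2*n+1+1)/2 = n+1 by omega]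
    refine Finset.sum_congr rfl fun i hi => ?_
    simp only [Finset.mem_range] at hi
    rw [show (2*n-2*i)/2 = n-i by omega]
  rw [EXmul] at step1
  have hG1 : PowerSeries.coeff (2*n) (Gseries t u κ 1) = Gc t u κ 1 n := by
    rw [Gseries, PowerSeries.coeff_mk, if_pos (by omega), show (2*n)/2 = n by omega]
  rw [hG1] at step1
  -- step 2 : split off the i = 0 term
  rw [Finset.sum_range_succ'] at step1
  have h00 : PowerSeries.coeff (2*0) (EXser t u κ 0) * Gc t u κ 0 (n-0)
      = Gc t u κ 0 n := by
    rw [show 2*0 = 0 by ring, EXser_coeff_zero, if_pos rfl, one_mul, Nat.sub_zero]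
  rw [h00] at step1
  -- step 3 : Pochhammer identity
  have hpoch : ((K:ℝ)+1) * Gc t u κ 0 n = t * (Gc t u κ 1 n - Gc t u κ 0 n) := by
    rw [Gc_zero_idx, Gc_one_idx, hn]
    have e1 := poch_sub t K
    have e2 := poch_succ_left t K
    push_cast at e1 e2 ⊢
    linear_combination (-(t) * (pochEval u (K+1) * Bs κ (K+1))) * e1
      + (((K:ℝ)+1) * (pochEval u (K+1) * Bs κ (K+1))) * e2
  have hidx : ∀ i ∈ Finset.range n, PowerSeries.coeff (2*(i+1)) (EXser t u κ 0)
      * Gc t u κ 0 (n-(i+1)) = PowerSeries.coeff (2*(i+1)) (EXser t u κ 0)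
      * Gc t u κ 0 (K-i) := by
    intro i hi
    rw [show n-(i+1) = K-i by omega]
  rw [hpoch, step1, Finset.sum_congr rfl hidx]
  ring

lemma m_eq_P (ht : ∀ i : ℕ, t + i ≠ 0) (hu : ∀ i : ℕ, u + i ≠ 0)
    (h1 : fexp (evenSeries κ) = coeffSeriesTU t u a)
    (h2 : fexp (PowerSeries.C t * evenSeries mm) = coeffSeries a) :
    ∀ k, 1 ≤ k → mm k = PowerSeries.coeff (2*k) (EXser t u κ 0) := by
  have ht0 : t ≠ 0 := by have := ht 0; simpa using this
  intro k
  induction k using Nat.strong_induction_on with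
  | _ k ih =>
    intro hk
    obtain ⟨K, rfl⟩ : ∃ K, k = K+1 := ⟨k-1, by omega⟩
    have e1 := arec t u κ a mm ht hu h1 h2 K
    have e2 := Prec t u κ K
    rw [e2] at e1
    have e3 := mul_left_cancel₀ ht0 e1.symm
    rw [Finset.sum_range_succ, Finset.sum_range_succ] at e3
    have e4 : ∀ s ∈ Finset.range K,
        mm (s+1) * Gc t u κ 0 (K-s)
        = PowerSeries.coeff (2*(s+1)) (EXser t u κ 0) * Gc t u κ 0 (K-s) := by
      intro s hs
      simp only [Finset.mem_range] at hs
      rw [ih (s+1) (by omega) (by omega)]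
    rw [Finset.sum_congr rfl e4] at e3
    have e5 : Gc t u κ 0 (K-K) = 1 := by
      rw [show K-K = 0 by omega, Gc_zero]
    rw [e5, mul_one, mul_one] at e3
    linarith [e3]

end Final

end Luk

/-- Theorem 3.9: the moment `m_{2k}` is the sum of the weights `w_{t,u}(P)` over all odd
Łukasiewicz paths `P` of length `2k`: each up step `(1,2s-1)` contributes a factor `κ_{2s}`,
each down step from odd height `2s+1` contributes `(u+s)`, and each down step from even
height `2s` contributes `(t+s)`.  (For an up step, `f i = 2s`, so `s = (f i)/2`; a step is a
down step iff it is not an up step, i.e. `f i < 2`.) -/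
theorem moments_via_lukasiewicz_paths (t u : ℝ)
    (ht : ∀ i : ℕ, t + i ≠ 0) (hu : ∀ i : ℕ, u + i ≠ 0)
    (a κ m : ℕ → ℝ)
    (h1 : fexp (evenSeries κ) = coeffSeriesTU t u a)
    (h2 : fexp (PowerSeries.C t * evenSeries m) = coeffSeries a) :
    ∀ k : ℕ, 1 ≤ k →
      m k = ∑ f ∈ oddLukPaths (2 * k), ∏ i : Fin (2 * k),
        (if 2 ≤ (f i : ℕ) then κ ((f i : ℕ) / 2)
         else if pathHeightE f (i : ℕ) % 2 = 1 then
           u + (((pathHeightE f (i : ℕ) - 1) / 2 : ℤ) : ℝ)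
         else t + ((pathHeightE f (i : ℕ) / 2 : ℤ) : ℝ)) := by
  classical
  intro k hk
  have hm := Luk.m_eq_P t u κ a m ht hu h1 h2 k hk
  have hcf := Luk.CF t u κ (2*k) 0
  rw [hm, ← hcf]
  rw [Luk.WSum, oddLukPaths]
  have hset : Finset.univ.filter (fun f : Fin (2*k) → Fin (2*k+1) => Luk.ValidFrom ((0:ℕ):ℤ) f)
      = Finset.univ.filter (fun f : Fin (2*k) → Fin (2*k+1) => IsOddLukPathE f) := by
    apply Finset.filter_congr
    intro f _
    constructor
    · rintro ⟨hA, hB, hC⟩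
      refine ⟨hA, fun mm hmm => ?_, ?_⟩
      · have := hB mm hmm
        simpa using this
      · have := hC
        simpa using this
    · rintro ⟨hA, hB, hC⟩
      refine ⟨hA, fun mm hmm => ?_, ?_⟩
      · have := hB mm hmm
        simpa using this
      · simpa using hC
  rw [hset]
  refine Finset.sum_congr rfl fun f hf => ?_
  refine Finset.prod_congr rfl fun i _ => ?_
  rw [Luk.wstep, Luk.dwt]
  norm_num
end

section
/- Let d ≥ 1 and let p(x) = x^d + Σ_{i=1}^d (−1)^i a_i x^{d−i} and r(x) = x^d + Σ_{i=1}^d (−1)^i b_i x^{d−i} be monic real polynomials of degree d. Then the finite free cumulants of their symmetric additive convolution satisfy K_ℓ[p ⊞_d r] = K_ℓ[p] + K_ℓ[r] for all ℓ = 1, …, d. -/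
open Finset

/-- Formal logarithm of a power series with constant term 1. -/
noncomputable def flog (F : PowerSeries ℝ) : PowerSeries ℝ :=
  PowerSeries.mk fun n =>
    ∑ k ∈ Finset.range n, (-1 : ℝ) ^ k * (PowerSeries.coeff (R := ℝ) n ((F - 1) ^ (k + 1))) / (k + 1)

/-- The finite free cumulants `K_ℓ[p]` of a monic polynomial
`p(x) = x^d + Σ_{i=1}^d (-1)^i a_i x^{d-i}` of degree `d`, given in terms of its
coefficient sequence `a`:  `K_ℓ[p] = ℓ·[z^ℓ] log(1 + Σ_{i=1}^d (a_i/(-d)_i) z^i)`. -/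
noncomputable def ffCumulant (d : ℕ) (a : ℕ → ℝ) (ℓ : ℕ) : ℝ :=
  (ℓ : ℝ) * PowerSeries.coeff (R := ℝ) ℓ (flog (PowerSeries.mk fun j =>
    if j = 0 then 1
    else if j ≤ d then a j / pochEval (-(d : ℝ)) j else 0))

/-- The coefficient sequence of the symmetric additive convolution `p ⊞_d r`:
`(p ⊞_d r)(x) = x^d + Σ_{k=1}^d (-1)^k c_k x^{d-k}` with
`c_k = Σ_{i+j=k} ((d-i)!(d-j)!/(d!(d-k)!)) a_i b_j` (with `a_0 = b_0 = 1`). -/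
noncomputable def symConvCoeff (d : ℕ) (a b : ℕ → ℝ) (k : ℕ) : ℝ :=
  ∑ i ∈ Finset.range (k + 1),
    (((d - i).factorial : ℝ) * ((d - (k - i)).factorial : ℝ) /
        ((d.factorial : ℝ) * ((d - k).factorial : ℝ))) *
      ((if i = 0 then 1 else a i) * (if k - i = 0 then 1 else b (k - i)))

section Aux

open PowerSeries

lemma pochEval_neg_nat (d n : ℕ) :
    pochEval (-(d : ℝ)) n = (-1) ^ n * (d.descFactorial n : ℝ) := by
  rw [pochEval, ascPochhammer_eval_neg_eq_descPochhammer,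
    descPochhammer_eval_eq_descFactorial]

lemma coeff_pow_zero_of_lt {y : ℝ⟦X⟧} (hy : constantCoeff (R := ℝ) y = 0) {n m : ℕ} (h : n < m) :
    coeff (R := ℝ) n (y ^ m) = 0 := by
  have hd : (X : ℝ⟦X⟧) ^ m ∣ y ^ m := pow_dvd_pow_of_dvd (X_dvd_iff.mpr hy) m
  exact (X_pow_dvd_iff.mp hd) n h

/-- `coeff n (flog F)` agrees with the coefficient of any long-enough partial sum of the
log series. -/
lemma coeff_flog_eq (F : ℝ⟦X⟧) (hF : constantCoeff (R := ℝ) F = 1) {n N : ℕ} (h : n ≤ N) :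
    coeff (R := ℝ) n (flog F) =
      coeff (R := ℝ) n (∑ k ∈ range N, C (R := ℝ) ((-1) ^ k / (k + 1)) * (F - 1) ^ (k + 1)) := by
  have hy : constantCoeff (R := ℝ) (F - 1) = 0 := by simp [hF]
  rw [flog, coeff_mk, map_sum]
  rw [← Finset.sum_subset (Finset.range_subset_range.mpr h)
    (fun k _ hk' => by
      rw [coeff_C_mul, coeff_pow_zero_of_lt hy (by simp only [mem_range, not_lt] at hk'; omega),
        mul_zero])]
  refine Finset.sum_congr rfl fun k _ => ?_
  rw [coeff_C_mul]
  ring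

lemma coeff_zero_flog (F : ℝ⟦X⟧) : coeff (R := ℝ) 0 (flog F) = 0 := by
  simp [flog]

lemma deriv_partial (F : ℝ⟦X⟧) (N : ℕ) :
    d⁄dX ℝ (∑ k ∈ range N, C (R := ℝ) ((-1) ^ k / (k + 1)) * (F - 1) ^ (k + 1)) =
      (∑ k ∈ range N, (-(F - 1)) ^ k) * d⁄dX ℝ F := by
  rw [map_sum, Finset.sum_mul]
  refine Finset.sum_congr rfl fun k _ => ?_
  have hD1 : d⁄dX ℝ (F - 1) = d⁄dX ℝ F := by
    rw [map_sub, Derivation.map_one_eq_zero, sub_zero]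
  rw [Derivation.leibniz, derivative_C, smul_zero, add_zero, Derivation.leibniz_pow, hD1]
  have hk1 : ((k : ℝ) + 1) ≠ 0 := by positivity
  rw [Nat.add_sub_cancel]
  simp only [smul_eq_mul, nsmul_eq_mul]
  push_cast
  have hc : ((k : ℝ⟦X⟧) + 1) = C (R := ℝ) ((k : ℝ) + 1) := by rw [map_add, map_one, map_natCast]
  rw [hc, show C (R := ℝ) ((-1) ^ k / ((k : ℝ) + 1)) * (C (R := ℝ) ((k : ℝ) + 1) * ((F - 1) ^ k * d⁄dX ℝ F))
      = (C (R := ℝ) ((-1) ^ k / ((k : ℝ) + 1)) * C (R := ℝ) ((k : ℝ) + 1)) * ((F - 1) ^ k * d⁄dX ℝ F) from by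
        ring,
    ← map_mul, div_mul_cancel₀ _ hk1, map_pow, map_neg, map_one, neg_pow (F - 1)]
  ring

lemma mul_deriv_flog (F : ℝ⟦X⟧) (hF : constantCoeff (R := ℝ) F = 1) :
    F * d⁄dX ℝ (flog F) = d⁄dX ℝ F := by
  ext n
  set N := n + 2 with hN
  set S : ℝ⟦X⟧ := ∑ k ∈ range N, C (R := ℝ) ((-1) ^ k / (k + 1)) * (F - 1) ^ (k + 1) with hS
  have hcoe : ∀ m ≤ n, coeff (R := ℝ) m (d⁄dX ℝ (flog F)) = coeff (R := ℝ) m (d⁄dX ℝ S) := by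
    intro m hm
    rw [coeff_derivative, coeff_derivative, coeff_flog_eq F hF (show m + 1 ≤ N by omega)]
  have h1 : coeff (R := ℝ) n (F * d⁄dX ℝ (flog F)) = coeff (R := ℝ) n (F * d⁄dX ℝ S) := by
    rw [coeff_mul, coeff_mul]
    refine Finset.sum_congr rfl fun p hp => ?_
    rw [Finset.HasAntidiagonal.mem_antidiagonal] at hp
    rw [hcoe p.2 (by omega)]
  rw [h1, deriv_partial, ← mul_assoc]
  have hgeom : F * (∑ k ∈ range N, (-(F - 1)) ^ k) = 1 - (-(F - 1)) ^ N := by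
    have := geom_sum_mul (-(F - 1)) N
    have h2 : (-(F - 1) - 1) = -F := by ring
    rw [h2] at this
    calc F * (∑ k ∈ range N, (-(F - 1)) ^ k)
        = -((∑ k ∈ range N, (-(F - 1)) ^ k) * (-F)) := by ring
      _ = -((-(F - 1)) ^ N - 1) := by rw [this]
      _ = 1 - (-(F - 1)) ^ N := by ring
  rw [hgeom, sub_mul, one_mul, map_sub]
  have hz : coeff (R := ℝ) n ((-(F - 1)) ^ N * d⁄dX ℝ F) = 0 := by
    have hy : constantCoeff (R := ℝ) (-(F - 1)) = 0 := by simp [hF]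
    have hd : (X : ℝ⟦X⟧) ^ N ∣ (-(F - 1)) ^ N * d⁄dX ℝ F :=
      Dvd.dvd.mul_right (pow_dvd_pow_of_dvd (X_dvd_iff.mpr hy) N) _
    exact (X_pow_dvd_iff.mp hd) n (by omega)
  rw [hz, sub_zero]

lemma flog_mul (F G : ℝ⟦X⟧) (hF : constantCoeff (R := ℝ) F = 1) (hG : constantCoeff (R := ℝ) G = 1) :
    flog (F * G) = flog F + flog G := by
  have hFG : constantCoeff (R := ℝ) (F * G) = 1 := by rw [map_mul, hF, hG, mul_one]
  have hne : (F * G : ℝ⟦X⟧) ≠ 0 := by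
    intro h
    rw [h, map_zero] at hFG
    norm_num at hFG
  apply PowerSeries.derivative.ext (R := ℝ)
  · apply mul_left_cancel₀ hne
    calc (F * G) * d⁄dX ℝ (flog (F * G)) = d⁄dX ℝ (F * G) := mul_deriv_flog _ hFG
      _ = F * (G * d⁄dX ℝ (flog G)) + G * (F * d⁄dX ℝ (flog F)) := by
          rw [Derivation.leibniz, smul_eq_mul, smul_eq_mul,
            mul_deriv_flog F hF, mul_deriv_flog G hG]
      _ = (F * G) * d⁄dX ℝ (flog F + flog G) := by rw [map_add]; ring
  · rw [← coeff_zero_eq_constantCoeff_apply, ← coeff_zero_eq_constantCoeff_apply,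
      map_add, coeff_zero_flog, coeff_zero_flog, coeff_zero_flog, zero_add]

lemma coeff_pow_congr {P Q : ℝ⟦X⟧} {n : ℕ} (h : ∀ m ≤ n, coeff (R := ℝ) m P = coeff (R := ℝ) m Q) :
    ∀ j : ℕ, ∀ m ≤ n, coeff (R := ℝ) m (P ^ j) = coeff (R := ℝ) m (Q ^ j) := by
  intro j
  induction j with
  | zero => intro m _; rfl
  | succ j ih =>
    intro m hm
    rw [pow_succ, pow_succ, coeff_mul, coeff_mul]
    refine Finset.sum_congr rfl fun p hp => ?_
    rw [Finset.HasAntidiagonal.mem_antidiagonal] at hp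
    rw [ih p.1 (by omega), h p.2 (by omega)]

lemma coeff_flog_congr {F G : ℝ⟦X⟧} {n : ℕ} (h : ∀ m ≤ n, coeff (R := ℝ) m F = coeff (R := ℝ) m G) :
    coeff (R := ℝ) n (flog F) = coeff (R := ℝ) n (flog G) := by
  have h' : ∀ m ≤ n, coeff (R := ℝ) m (F - 1) = coeff (R := ℝ) m (G - 1) := by
    intro m hm
    rw [map_sub, map_sub, h m hm]
  rw [flog, flog, coeff_mk, coeff_mk]
  refine Finset.sum_congr rfl fun k _ => ?_
  rw [coeff_pow_congr h' (k + 1) n le_rfl]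

lemma pochEval_ne_zero {d n : ℕ} (h : n ≤ d) : pochEval (-(d : ℝ)) n ≠ 0 := by
  rw [pochEval_neg_nat]
  have h1 : d.descFactorial n ≠ 0 := by
    intro h0
    have := Nat.descFactorial_eq_zero_iff_lt.mp h0
    omega
  positivity

end Aux

section Main

open PowerSeries

lemma coeff_entry (d : ℕ) (x : ℕ → ℝ) {i : ℕ} (hid : i ≤ d) :
    (if i = 0 then (1:ℝ) else if i ≤ d then x i / pochEval (-(d : ℝ)) i else 0) =
      (if i = 0 then (1:ℝ) else x i) / pochEval (-(d : ℝ)) i := by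
  rcases eq_or_ne i 0 with h | h
  · subst h; simp [pochEval]
  · rw [if_neg h, if_neg h, if_pos hid]

/-- The key coefficient identity: the generating series of the convolution agrees with the
product of the generating series up to degree `d`. -/
lemma conv_coeff_eq (d : ℕ) (a b : ℕ → ℝ) {i j : ℕ} (hd : i + j ≤ d) :
    ((d - i).factorial : ℝ) * ((d - j).factorial : ℝ) /
        ((d.factorial : ℝ) * ((d - (i + j)).factorial : ℝ)) *
      ((if i = 0 then (1:ℝ) else a i) * (if j = 0 then (1:ℝ) else b j)) /
      pochEval (-(d : ℝ)) (i + j) =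
    ((if i = 0 then (1:ℝ) else a i) / pochEval (-(d : ℝ)) i) *
      ((if j = 0 then (1:ℝ) else b j) / pochEval (-(d : ℝ)) j) := by
  set A := (if i = 0 then (1:ℝ) else a i)
  set B := (if j = 0 then (1:ℝ) else b j)
  have hfac : ∀ n ≤ d, ((d - n).factorial : ℝ) * (d.descFactorial n : ℝ) = (d.factorial : ℝ) := by
    intro n hn
    exact_mod_cast congrArg (Nat.cast : ℕ → ℝ) (Nat.factorial_mul_descFactorial hn)
  have hDesc : ∀ n ≤ d, (d.descFactorial n : ℝ) =
      (d.factorial : ℝ) / ((d - n).factorial : ℝ) := by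
    intro n hn
    rw [eq_div_iff (by exact_mod_cast (Nat.factorial_ne_zero (d - n)))]
    rw [mul_comm]
    exact hfac n hn
  rw [pochEval_neg_nat, pochEval_neg_nat, pochEval_neg_nat,
    hDesc i (by omega), hDesc j (by omega), hDesc (i + j) hd]
  have hu : ((d - i).factorial : ℝ) ≠ 0 := by exact_mod_cast Nat.factorial_ne_zero _
  have hv : ((d - j).factorial : ℝ) ≠ 0 := by exact_mod_cast Nat.factorial_ne_zero _
  have hw : ((d - (i + j)).factorial : ℝ) ≠ 0 := by exact_mod_cast Nat.factorial_ne_zero _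
  have ht : ((d).factorial : ℝ) ≠ 0 := by exact_mod_cast Nat.factorial_ne_zero _
  have hsi : ((-1 : ℝ)) ^ i ≠ 0 := pow_ne_zero _ (by norm_num)
  have hsj : ((-1 : ℝ)) ^ j ≠ 0 := pow_ne_zero _ (by norm_num)
  rw [pow_add]
  field_simp

theorem finite_free_cumulants_linearize' (d : ℕ) (hd : 1 ≤ d) (a b : ℕ → ℝ) :
    ∀ ℓ : ℕ, 1 ≤ ℓ → ℓ ≤ d →
      ffCumulant d (symConvCoeff d a b) ℓ = ffCumulant d a ℓ + ffCumulant d b ℓ := by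
  intro ℓ hℓ1 hℓd
  set Fa : ℝ⟦X⟧ := PowerSeries.mk fun j =>
    if j = 0 then 1 else if j ≤ d then a j / pochEval (-(d : ℝ)) j else 0 with hFa
  set Fb : ℝ⟦X⟧ := PowerSeries.mk fun j =>
    if j = 0 then 1 else if j ≤ d then b j / pochEval (-(d : ℝ)) j else 0 with hFb
  set Fc : ℝ⟦X⟧ := PowerSeries.mk fun j =>
    if j = 0 then 1 else if j ≤ d then symConvCoeff d a b j / pochEval (-(d : ℝ)) j else 0
    with hFc
  have hca : constantCoeff (R := ℝ) Fa = 1 := by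
    rw [← coeff_zero_eq_constantCoeff_apply, hFa, coeff_mk]; simp
  have hcb : constantCoeff (R := ℝ) Fb = 1 := by
    rw [← coeff_zero_eq_constantCoeff_apply, hFb, coeff_mk]; simp
  have key : ∀ m ≤ ℓ, coeff (R := ℝ) m Fc = coeff (R := ℝ) m (Fa * Fb) := by
    intro m hm
    have hmd : m ≤ d := le_trans hm hℓd
    rw [coeff_mul, Finset.Nat.sum_antidiagonal_eq_sum_range_succ_mk]
    have hterm : ∀ i ∈ Finset.range (m + 1),
        coeff (R := ℝ) i Fa * coeff (R := ℝ) (m - i) Fb =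
        ((if i = 0 then (1:ℝ) else a i) / pochEval (-(d : ℝ)) i) *
          ((if m - i = 0 then (1:ℝ) else b (m - i)) / pochEval (-(d : ℝ)) (m - i)) := by
      intro i hi
      rw [Finset.mem_range] at hi
      rw [hFa, hFb, coeff_mk, coeff_mk]
      have hid : i ≤ d := by omega
      have hjd : m - i ≤ d := by omega
      rw [coeff_entry d a hid, coeff_entry d b hjd]
    rw [Finset.sum_congr rfl hterm]
    rcases Nat.eq_zero_or_pos m with hm0 | hm0
    · subst hm0
      rw [hFc, coeff_mk]
      simp [pochEval]
    · rw [hFc, coeff_mk, if_neg (by omega), if_pos hmd, symConvCoeff, Finset.sum_div]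
      refine Finset.sum_congr rfl fun i hi => ?_
      rw [Finset.mem_range] at hi
      have hij : i + (m - i) = m := by omega
      calc ((d - i).factorial : ℝ) * ((d - (m - i)).factorial : ℝ) /
            ((d.factorial : ℝ) * ((d - m).factorial : ℝ)) *
            ((if i = 0 then (1:ℝ) else a i) * (if m - i = 0 then (1:ℝ) else b (m - i))) /
            pochEval (-(d : ℝ)) m
          = ((d - i).factorial : ℝ) * ((d - (m - i)).factorial : ℝ) /
            ((d.factorial : ℝ) * ((d - (i + (m - i))).factorial : ℝ)) *
            ((if i = 0 then (1:ℝ) else a i) * (if m - i = 0 then (1:ℝ) else b (m - i))) /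
            pochEval (-(d : ℝ)) (i + (m - i)) := by rw [hij]
        _ = _ := conv_coeff_eq d a b (by omega)
  have hgoal : coeff (R := ℝ) ℓ (flog Fc) = coeff (R := ℝ) ℓ (flog Fa) + coeff (R := ℝ) ℓ (flog Fb) := by
    rw [coeff_flog_congr key, flog_mul Fa Fb hca hcb, map_add]
  show (ℓ : ℝ) * coeff (R := ℝ) ℓ (flog Fc) = (ℓ : ℝ) * coeff (R := ℝ) ℓ (flog Fa) +
    (ℓ : ℝ) * coeff (R := ℝ) ℓ (flog Fb)
  rw [hgoal]
  ring

end Main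

/-- Corollary 4.3 (Arizmendi–Perales): finite free cumulants linearize the symmetric
additive convolution:  `K_ℓ[p ⊞_d r] = K_ℓ[p] + K_ℓ[r]` for all `ℓ = 1, …, d`. -/
theorem finite_free_cumulants_linearize (d : ℕ) (hd : 1 ≤ d) (a b : ℕ → ℝ) :
    ∀ ℓ : ℕ, 1 ≤ ℓ → ℓ ≤ d →
      ffCumulant d (symConvCoeff d a b) ℓ = ffCumulant d a ℓ + ffCumulant d b ℓ :=
  finite_free_cumulants_linearize' d hd a b
end
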